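/- Consider the multicameral game with n houses H_1,…,H_n of sizes m_1,…,m_n (each m_j ≥ 1) and simple-majority quotas q_j = ⌈(m_j+1)/2⌉. Let r be a member of house H_j and s a member of house H_l with j ≠ l and m_j < m_l, and suppose one of the following holds: m_j and m_l are both odd; m_j and m_l are both even; m_j is even and m_l is odd; or m_j is odd, m_l is even, and m_l > 2·m_j. Then c_r(k) > c_s(k) for every k such that c_r(k) ≠ 0; that is, the member of the smaller house has strictly larger critical numbers. -/

import Mathlib

open Finset

/-- A coalition in the multicameral game with `n` houses, where house `j` has `m j`
members, is winning iff it contains at least `q j` members of house `j` for every `j`. -/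
def multiWinning (n : ℕ) (m : Fin n → ℕ) (q : Fin n → ℕ)
    (S : Finset ((j : Fin n) × Fin (m j))) : Prop :=
  ∀ j : Fin n, q j ≤ (S.filter (fun p => p.1 = j)).card

/-- The number of coalitions of size `k` in which player `i` is critical in the
multicameral game. -/
noncomputable def multiCrit (n : ℕ) (m : Fin n → ℕ) (q : Fin n → ℕ)
    (i : (j : Fin n) × Fin (m j)) (k : ℕ) : ℕ :=
  Set.ncard {S : Finset ((j : Fin n) × Fin (m j)) |
    S.card = k ∧ i ∈ S ∧ multiWinning n m q S ∧ ¬ multiWinning n m q (S.erase i)}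

/-! ### Auxiliary material -/

private def MCases (p P : ℕ) : Prop :=
  (Odd p ∧ Odd P) ∨ (Even p ∧ Even P) ∨ (Even p ∧ Odd P) ∨ (Odd p ∧ Even P ∧ P > 2 * p)

private lemma arith_base {p P : ℕ} (hp : 1 ≤ p) (hlt : p < P) (hc : MCases p P) :
    p * (P / 2 + 1) < (p / 2 + 1) * P := by
  rcases hc with ⟨⟨u, hu⟩, ⟨v, hv⟩⟩ | ⟨⟨u, hu⟩, ⟨v, hv⟩⟩ | ⟨⟨u, hu⟩, ⟨v, hv⟩⟩ |
    ⟨⟨u, hu⟩, ⟨v, hv⟩, hPp⟩ <;> subst hu hv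
  · rw [show (2*u+1)/2 = u by omega, show (2*v+1)/2 = v by omega]; nlinarith
  · rw [show (u+u)/2 = u by omega, show (v+v)/2 = v by omega]; nlinarith
  · rw [show (u+u)/2 = u by omega, show (2*v+1)/2 = v by omega]; nlinarith
  · rw [show (2*u+1)/2 = u by omega, show (v+v)/2 = v by omega]; nlinarith

private lemma arith_step {p P d : ℕ} (hp : 1 ≤ p) (hlt : p < P) (hc : MCases p P)
    (hd : d + 1 ≤ p - (p / 2 + 1)) :
    0 < (p - (p / 2 + 1 + d)) * (P / 2 + 1 + d + 1) ∧
      (p - (p / 2 + 1 + d)) * (P / 2 + 1 + d + 1) ≤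
        (P - (P / 2 + 1 + d)) * (p / 2 + 1 + d + 1) := by
  rcases hc with ⟨⟨u, hu⟩, ⟨v, hv⟩⟩ | ⟨⟨u, hu⟩, ⟨v, hv⟩⟩ | ⟨⟨u, hu⟩, ⟨v, hv⟩⟩ |
    ⟨⟨u, hu⟩, ⟨v, hv⟩, hPp⟩ <;> subst hu hv
  · have h1 : (2*u+1)/2 = u := by omega
    have h2 : (2*v+1)/2 = v := by omega
    rw [h1, h2] at *
    constructor
    · have : 0 < (2*u+1) - (u+1+d) := by omega
      positivity
    · zify [show u + 1 + d ≤ 2*u+1 by omega, show v + 1 + d ≤ 2*v+1 by omega]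
      nlinarith [show (d:ℤ) + 1 ≤ u by exact_mod_cast (by omega : d + 1 ≤ u),
        show (u:ℤ) < v by exact_mod_cast (by omega : u < v)]
  · have h1 : (u+u)/2 = u := by omega
    have h2 : (v+v)/2 = v := by omega
    rw [h1, h2] at *
    constructor
    · have : 0 < (u+u) - (u+1+d) := by omega
      positivity
    · zify [show u + 1 + d ≤ u+u by omega, show v + 1 + d ≤ v+v by omega]
      nlinarith [show (d:ℤ) + 2 ≤ u by exact_mod_cast (by omega : d + 2 ≤ u),
        show (u:ℤ) < v by exact_mod_cast (by omega : u < v)]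
  · have h1 : (u+u)/2 = u := by omega
    have h2 : (2*v+1)/2 = v := by omega
    rw [h1, h2] at *
    constructor
    · have : 0 < (u+u) - (u+1+d) := by omega
      positivity
    · zify [show u + 1 + d ≤ u+u by omega, show v + 1 + d ≤ 2*v+1 by omega]
      nlinarith [show (d:ℤ) + 2 ≤ u by exact_mod_cast (by omega : d + 2 ≤ u),
        show (u:ℤ) ≤ v by exact_mod_cast (by omega : u ≤ v)]
  · have h1 : (2*u+1)/2 = u := by omega
    have h2 : (v+v)/2 = v := by omega
    rw [h1, h2] at *
    constructor
    · have : 0 < (2*u+1) - (u+1+d) := by omega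
      positivity
    · zify [show u + 1 + d ≤ 2*u+1 by omega, show v + 1 + d ≤ v+v by omega]
      nlinarith [show (d:ℤ) + 1 ≤ u by exact_mod_cast (by omega : d + 1 ≤ u),
        show 2*(u:ℤ) + 2 ≤ v by exact_mod_cast (by omega : 2*u+2 ≤ v)]

private lemma key_choose {p P : ℕ} (hp : 1 ≤ p) (hlt : p < P) (hc : MCases p P) :
    ∀ d, d ≤ p - (p / 2 + 1) →
      Nat.choose p (p / 2 + 1 + d) * Nat.choose (P - 1) (P / 2) <
        Nat.choose (p - 1) (p / 2) * Nat.choose P (P / 2 + 1 + d) := by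
  have hP : 1 ≤ P := by omega
  have hqp : p / 2 + 1 ≤ p := by omega
  have hQP : P / 2 + 1 ≤ P := by omega
  have idp : p * Nat.choose (p - 1) (p / 2) = Nat.choose p (p / 2 + 1) * (p / 2 + 1) := by
    have h := Nat.add_one_mul_choose_eq (p - 1) (p / 2)
    rwa [show p - 1 + 1 = p by omega] at h
  have idP : P * Nat.choose (P - 1) (P / 2) = Nat.choose P (P / 2 + 1) * (P / 2 + 1) := by
    have h := Nat.add_one_mul_choose_eq (P - 1) (P / 2)
    rwa [show P - 1 + 1 = P by omega] at h
  intro d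
  induction d with
  | zero =>
    intro _
    have hb := arith_base hp hlt hc
    have hpos : 0 < Nat.choose p (p / 2 + 1) * Nat.choose P (P / 2 + 1) :=
      Nat.mul_pos (Nat.choose_pos hqp) (Nat.choose_pos hQP)
    have h2 : (p * P) * (Nat.choose p (p / 2 + 1 + 0) * Nat.choose (P - 1) (P / 2)) <
        (p * P) * (Nat.choose (p - 1) (p / 2) * Nat.choose P (P / 2 + 1 + 0)) := by
      have l1 : (p * P) * (Nat.choose p (p / 2 + 1 + 0) * Nat.choose (P - 1) (P / 2)) =
          (p * (P / 2 + 1)) * (Nat.choose p (p / 2 + 1) * Nat.choose P (P / 2 + 1)) := by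
        calc (p * P) * (Nat.choose p (p / 2 + 1 + 0) * Nat.choose (P - 1) (P / 2))
            = (p * Nat.choose p (p / 2 + 1)) * (P * Nat.choose (P - 1) (P / 2)) := by ring
          _ = (p * Nat.choose p (p / 2 + 1)) * (Nat.choose P (P / 2 + 1) * (P / 2 + 1)) := by
              rw [idP]
          _ = _ := by ring
      have l2 : (p * P) * (Nat.choose (p - 1) (p / 2) * Nat.choose P (P / 2 + 1 + 0)) =
          ((p / 2 + 1) * P) * (Nat.choose p (p / 2 + 1) * Nat.choose P (P / 2 + 1)) := by
        calc (p * P) * (Nat.choose (p - 1) (p / 2) * Nat.choose P (P / 2 + 1 + 0))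
            = (p * Nat.choose (p - 1) (p / 2)) * (P * Nat.choose P (P / 2 + 1)) := by ring
          _ = (Nat.choose p (p / 2 + 1) * (p / 2 + 1)) * (P * Nat.choose P (P / 2 + 1)) := by
              rw [idp]
          _ = _ := by ring
      rw [l1, l2]
      exact Nat.mul_lt_mul_of_lt_of_le hb le_rfl hpos
    exact Nat.lt_of_mul_lt_mul_left h2
  | succ d ih =>
    intro hd1
    have ihv := ih (by omega)
    obtain ⟨hMpos, hMN⟩ := arith_step hp hlt hc hd1
    have idp2 : Nat.choose p (p / 2 + 1 + d + 1) * (p / 2 + 1 + d + 1) =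
        Nat.choose p (p / 2 + 1 + d) * (p - (p / 2 + 1 + d)) :=
      Nat.choose_succ_right_eq p (p / 2 + 1 + d)
    have idP2 : Nat.choose P (P / 2 + 1 + d + 1) * (P / 2 + 1 + d + 1) =
        Nat.choose P (P / 2 + 1 + d) * (P - (P / 2 + 1 + d)) :=
      Nat.choose_succ_right_eq P (P / 2 + 1 + d)
    have h2 : ((p / 2 + 1 + d + 1) * (P / 2 + 1 + d + 1)) *
        (Nat.choose p (p / 2 + 1 + (d + 1)) * Nat.choose (P - 1) (P / 2)) <
        ((p / 2 + 1 + d + 1) * (P / 2 + 1 + d + 1)) *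
        (Nat.choose (p - 1) (p / 2) * Nat.choose P (P / 2 + 1 + (d + 1))) := by
      have e1 : ((p / 2 + 1 + d + 1) * (P / 2 + 1 + d + 1)) *
          (Nat.choose p (p / 2 + 1 + (d + 1)) * Nat.choose (P - 1) (P / 2)) =
          (Nat.choose p (p / 2 + 1 + d) * Nat.choose (P - 1) (P / 2)) *
            ((p - (p / 2 + 1 + d)) * (P / 2 + 1 + d + 1)) := by
        calc ((p / 2 + 1 + d + 1) * (P / 2 + 1 + d + 1)) *
            (Nat.choose p (p / 2 + 1 + (d + 1)) * Nat.choose (P - 1) (P / 2))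
            = (Nat.choose p (p / 2 + 1 + d + 1) * (p / 2 + 1 + d + 1)) *
              (Nat.choose (P - 1) (P / 2) * (P / 2 + 1 + d + 1)) := by ring
          _ = (Nat.choose p (p / 2 + 1 + d) * (p - (p / 2 + 1 + d))) *
              (Nat.choose (P - 1) (P / 2) * (P / 2 + 1 + d + 1)) := by rw [idp2]
          _ = _ := by ring
      have e2 : ((p / 2 + 1 + d + 1) * (P / 2 + 1 + d + 1)) *
          (Nat.choose (p - 1) (p / 2) * Nat.choose P (P / 2 + 1 + (d + 1))) =
          (Nat.choose (p - 1) (p / 2) * Nat.choose P (P / 2 + 1 + d)) *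
            ((P - (P / 2 + 1 + d)) * (p / 2 + 1 + d + 1)) := by
        calc ((p / 2 + 1 + d + 1) * (P / 2 + 1 + d + 1)) *
            (Nat.choose (p - 1) (p / 2) * Nat.choose P (P / 2 + 1 + (d + 1)))
            = (Nat.choose P (P / 2 + 1 + d + 1) * (P / 2 + 1 + d + 1)) *
              (Nat.choose (p - 1) (p / 2) * (p / 2 + 1 + d + 1)) := by ring
          _ = (Nat.choose P (P / 2 + 1 + d) * (P - (P / 2 + 1 + d))) *
              (Nat.choose (p - 1) (p / 2) * (p / 2 + 1 + d + 1)) := by rw [idP2]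
          _ = _ := by ring
      rw [e1, e2]
      calc (Nat.choose p (p / 2 + 1 + d) * Nat.choose (P - 1) (P / 2)) *
          ((p - (p / 2 + 1 + d)) * (P / 2 + 1 + d + 1))
          < (Nat.choose (p - 1) (p / 2) * Nat.choose P (P / 2 + 1 + d)) *
            ((p - (p / 2 + 1 + d)) * (P / 2 + 1 + d + 1)) :=
            Nat.mul_lt_mul_of_lt_of_le ihv le_rfl hMpos
        _ ≤ _ := Nat.mul_le_mul_left _ hMN
    exact Nat.lt_of_mul_lt_mul_left h2

private lemma card_powersetCard_mem {P Q : ℕ} (s : Fin P) (hQ : 1 ≤ Q) :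
    (((univ : Finset (Fin P)).powersetCard Q).filter (fun B => s ∈ B)).card =
      Nat.choose (P - 1) (Q - 1) := by
  have h : (((univ : Finset (Fin P)).powersetCard Q).filter (fun B => s ∈ B)).card =
      ((univ.erase s).powersetCard (Q - 1)).card := by
    refine Finset.card_nbij' (fun B => B.erase s) (fun A => insert s A) ?_ ?_ ?_ ?_
    · intro B hB
      simp only [Finset.mem_coe, Finset.mem_filter, Finset.mem_powersetCard_univ] at hB
      rw [Finset.mem_coe, Finset.mem_powersetCard]
      refine ⟨fun x hx => ?_, by rw [Finset.card_erase_of_mem hB.2, hB.1]⟩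
      rw [Finset.mem_erase] at hx ⊢
      exact ⟨hx.1, Finset.mem_univ _⟩
    · intro A hA
      rw [Finset.mem_coe, Finset.mem_powersetCard] at hA
      have hs : s ∉ A := fun h => by simpa using (hA.1 h)
      simp only [Finset.mem_coe, Finset.mem_filter, Finset.mem_powersetCard_univ]
      rw [Finset.card_insert_of_notMem hs, hA.2]
      exact ⟨by omega, Finset.mem_insert_self _ _⟩
    · intro B hB
      simp only [Finset.mem_coe, Finset.mem_filter] at hB
      exact Finset.insert_erase hB.2
    · intro A hA
      rw [Finset.mem_coe, Finset.mem_powersetCard] at hA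
      have hs : s ∉ A := fun h => by simpa using (hA.1 h)
      exact Finset.erase_insert hs
  rw [h, Finset.card_powersetCard, Finset.card_erase_of_mem (Finset.mem_univ s),
    Finset.card_univ, Fintype.card_fin]

private lemma exists_inj_of_card_lt {γ : Type*} [DecidableEq γ] [Nonempty γ] (s t : Finset γ)
    (h : s.card < t.card) :
    ∃ f : γ → γ, Set.InjOn f ↑s ∧ (∀ x ∈ s, f x ∈ t) ∧ ∃ y ∈ t, ∀ x ∈ s, f x ≠ y := by
  obtain ⟨f, hmaps, hinj⟩ := Set.Finite.exists_injOn_of_encard_le (s := (↑s : Set γ))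
    (t := (↑t : Set γ)) (s.finite_toSet)
    (by rw [Set.encard_coe_eq_coe_finsetCard, Set.encard_coe_eq_coe_finsetCard]
        exact_mod_cast h.le)
  have hmaps' : ∀ x ∈ s, f x ∈ t := fun x hx => by
    have := hmaps (by exact_mod_cast hx)
    simpa using this
  have himg : (s.image f) ⊆ t := by
    intro y hy
    rw [Finset.mem_image] at hy
    obtain ⟨x, hx, rfl⟩ := hy
    exact hmaps' x hx
  have hcard : (s.image f).card < t.card :=
    lt_of_le_of_lt Finset.card_image_le h
  obtain ⟨y, hyt, hyn⟩ := Finset.exists_of_ssubset (Finset.ssubset_iff_subset_ne.2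
    ⟨himg, fun he => by rw [he] at hcard; omega⟩)
  exact ⟨f, hinj, hmaps', y, hyt, fun x hx hfx =>
    hyn (Finset.mem_image.2 ⟨x, hx, hfx⟩)⟩

private def srcF (p P a Q : ℕ) (s : Fin P) : Finset (Finset (Fin p) × Finset (Fin P)) :=
  ((univ : Finset (Fin p)).powersetCard a) ×ˢ
    (((univ : Finset (Fin P)).powersetCard Q).filter (fun B => s ∈ B))

private lemma mem_srcF {p P a Q : ℕ} {s : Fin P} {x : Finset (Fin p) × Finset (Fin P)} :
    x ∈ srcF p P a Q s ↔ x.1.card = a ∧ s ∈ x.2 ∧ x.2.card = Q := by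
  simp only [srcF, Finset.mem_product, Finset.mem_filter, Finset.mem_powersetCard_univ]
  tauto

private def tgtF (p P qj b : ℕ) (r : Fin p) : Finset (Finset (Fin p) × Finset (Fin P)) :=
  (((univ : Finset (Fin p)).powersetCard qj).filter (fun A => r ∈ A)) ×ˢ
    ((univ : Finset (Fin P)).powersetCard b)

private lemma mem_tgtF {p P qj b : ℕ} {r : Fin p} {x : Finset (Fin p) × Finset (Fin P)} :
    x ∈ tgtF p P qj b r ↔ r ∈ x.1 ∧ x.1.card = qj ∧ x.2.card = b := by
  simp only [tgtF, Finset.mem_product, Finset.mem_filter, Finset.mem_powersetCard_univ]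
  tauto

private lemma card_srcF (p P a Q : ℕ) (s : Fin P) (hQ : 1 ≤ Q) :
    (srcF p P a Q s).card = Nat.choose p a * Nat.choose (P - 1) (Q - 1) := by
  rw [srcF, Finset.card_product, Finset.card_powersetCard, Finset.card_univ, Fintype.card_fin,
    card_powersetCard_mem s hQ]

private lemma card_tgtF (p P qj b : ℕ) (r : Fin p) (hqj : 1 ≤ qj) :
    (tgtF p P qj b r).card = Nat.choose (p - 1) (qj - 1) * Nat.choose P b := by
  rw [tgtF, Finset.card_product, Finset.card_powersetCard, Finset.card_univ, Fintype.card_fin,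
    card_powersetCard_mem r hqj]

private lemma exists_psi {p P : ℕ} (hp : 1 ≤ p) (hlt : p < P) (hc : MCases p P)
    (r : Fin p) (s : Fin P) (d : ℕ) (hd : d ≤ p - (p / 2 + 1)) :
    ∃ ψ : Finset (Fin p) × Finset (Fin P) → Finset (Fin p) × Finset (Fin P),
      Set.InjOn ψ ↑(srcF p P (p / 2 + 1 + d) (P / 2 + 1) s) ∧
      (∀ x ∈ srcF p P (p / 2 + 1 + d) (P / 2 + 1) s,
        ψ x ∈ tgtF p P (p / 2 + 1) (P / 2 + 1 + d) r) ∧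
      ∃ y ∈ tgtF p P (p / 2 + 1) (P / 2 + 1 + d) r,
        ∀ x ∈ srcF p P (p / 2 + 1 + d) (P / 2 + 1) s, ψ x ≠ y := by
  apply exists_inj_of_card_lt
  rw [card_srcF _ _ _ _ _ (by omega), card_tgtF _ _ _ _ _ (by omega)]
  have h := key_choose hp hlt hc d hd
  simpa using h

section Trace
variable {n : ℕ} {m : Fin n → ℕ}

private noncomputable def htrace (S : Finset ((j : Fin n) × Fin (m j))) (j : Fin n) :
    Finset (Fin (m j)) :=
  S.preimage (@Sigma.mk (Fin n) (fun j => Fin (m j)) j) (fun a _ b _ h => by injection h)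

private lemma mem_htrace {S : Finset ((j : Fin n) × Fin (m j))} {j : Fin n} {x : Fin (m j)} :
    x ∈ htrace S j ↔ ⟨j, x⟩ ∈ S := by
  unfold htrace; exact Finset.mem_preimage

private lemma htrace_card (S : Finset ((j : Fin n) × Fin (m j))) (j : Fin n) :
    (S.filter (fun p => p.1 = j)).card = (htrace S j).card := by
  rw [show S.filter (fun p => p.1 = j) =
      (htrace S j).map ⟨Sigma.mk j, sigma_mk_injective⟩ from ?_, Finset.card_map]
  ext ⟨j', x⟩
  simp only [Finset.mem_filter, Finset.mem_map, Function.Embedding.coeFn_mk, mem_htrace]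
  constructor
  · rintro ⟨hS, rfl⟩
    exact ⟨x, hS, rfl⟩
  · rintro ⟨y, hy, h⟩
    cases h
    exact ⟨hy, rfl⟩

private lemma htrace_sum (S : Finset ((j : Fin n) × Fin (m j))) :
    S.card = ∑ j, (htrace S j).card := by
  rw [Finset.card_eq_sum_card_fiberwise (f := Sigma.fst) (t := univ) (fun x _ => mem_univ _)]
  exact Finset.sum_congr rfl fun j _ => htrace_card S j

private lemma htrace_injective :
    Function.Injective (htrace (n := n) (m := m)) := by
  intro S T h
  ext ⟨j, x⟩
  rw [← mem_htrace, ← mem_htrace, h]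

private lemma htrace_sigma (f : ∀ j, Finset (Fin (m j))) :
    htrace (Finset.univ.sigma f) = f := by
  funext j
  ext x
  simp [mem_htrace, Finset.mem_sigma]

private lemma htrace_erase_self (S : Finset ((j : Fin n) × Fin (m j))) (j : Fin n)
    (x : Fin (m j)) : htrace (S.erase ⟨j, x⟩) j = (htrace S j).erase x := by
  ext y
  simp only [mem_htrace, Finset.mem_erase]
  constructor
  · rintro ⟨h1, h2⟩
    exact ⟨fun hyx => h1 (by rw [hyx]), h2⟩
  · rintro ⟨h1, h2⟩
    refine ⟨fun h => h1 ?_, h2⟩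
    simpa using h

private lemma htrace_erase_ne (S : Finset ((j : Fin n) × Fin (m j))) {j j' : Fin n}
    (x : Fin (m j)) (h : j' ≠ j) : htrace (S.erase ⟨j, x⟩) j' = htrace S j' := by
  ext y
  simp only [mem_htrace, Finset.mem_erase]
  constructor
  · rintro ⟨_, h2⟩; exact h2
  · intro h2
    refine ⟨fun he => h ?_, h2⟩
    exact congrArg Sigma.fst he

private lemma crit_iff (q : Fin n → ℕ) (j : Fin n) (r : Fin (m j))
    (k : ℕ) (S : Finset ((j : Fin n) × Fin (m j))) :
    (S.card = k ∧ ⟨j, r⟩ ∈ S ∧ multiWinning n m q S ∧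
      ¬ multiWinning n m q (S.erase ⟨j, r⟩)) ↔
    (r ∈ htrace S j ∧ (htrace S j).card = q j ∧ (∀ j', q j' ≤ (htrace S j').card) ∧
      ∑ j', (htrace S j').card = k) := by
  unfold multiWinning
  constructor
  · rintro ⟨hk, hmem, hw, hnw⟩
    have hquot : ∀ j', q j' ≤ (htrace S j').card := fun j' => (htrace_card S j') ▸ hw j'
    refine ⟨mem_htrace.2 hmem, ?_, hquot, by rw [← htrace_sum]; exact hk⟩
    push_neg at hnw
    obtain ⟨j₀, hj₀⟩ := hnw
    rw [htrace_card] at hj₀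
    by_cases hj : j₀ = j
    · subst hj
      rw [htrace_erase_self, Finset.card_erase_of_mem (mem_htrace.2 hmem)] at hj₀
      have := hquot j₀
      omega
    · rw [htrace_erase_ne S r hj] at hj₀
      exact absurd (hquot j₀) (by omega)
  · rintro ⟨hmem, hcard, hquot, hsum⟩
    refine ⟨by rw [htrace_sum]; exact hsum, mem_htrace.1 hmem,
      fun j' => (htrace_card S j') ▸ hquot j', ?_⟩
    intro hw
    have h := hw j
    rw [htrace_card, htrace_erase_self, Finset.card_erase_of_mem hmem, hcard] at h
    have hpos : 0 < q j := by
      rw [← hcard]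
      exact Finset.card_pos.2 ⟨r, hmem⟩
    omega

private lemma sum_update2 {j l : Fin n} (hjl : j ≠ l)
    (f : ∀ j', Finset (Fin (m j'))) (A : Finset (Fin (m j))) (B : Finset (Fin (m l))) :
    ∑ j', ((Function.update (Function.update f j A) l B) j').card +
        ((f j).card + (f l).card) =
      ∑ j', (f j').card + (A.card + B.card) := by
  classical
  have key : ∀ g : (∀ j', Finset (Fin (m j'))),
      ∑ j', (g j').card =
        (∑ j' ∈ (univ.erase l).erase j, (g j').card) + ((g j).card + (g l).card) := by
    intro g
    rw [← Finset.sum_erase_add univ _ (mem_univ l),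
      ← Finset.sum_erase_add (univ.erase l) _ (Finset.mem_erase.2 ⟨hjl, mem_univ j⟩)]
    ring_nf
  rw [key (Function.update (Function.update f j A) l B), key f]
  have h1 : ∀ j' ∈ (univ.erase l).erase j,
      ((Function.update (Function.update f j A) l B) j').card = (f j').card := by
    intro j' hj'
    rw [Finset.mem_erase, Finset.mem_erase] at hj'
    rw [Function.update_of_ne hj'.2.1, Function.update_of_ne hj'.1]
  rw [Finset.sum_congr rfl h1,
    Function.update_self,
    Function.update_of_ne hjl, Function.update_self]
  ring_nf

private def famSet (q : Fin n → ℕ) (j₀ : Fin n) (r₀ : Fin (m j₀)) (k : ℕ) :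
    Set (∀ j', Finset (Fin (m j'))) :=
  {f | r₀ ∈ f j₀ ∧ (f j₀).card = q j₀ ∧ (∀ j', q j' ≤ (f j').card) ∧
    ∑ j', (f j').card = k}

private lemma multiCrit_eq (q : Fin n → ℕ) (j₀ : Fin n) (r₀ : Fin (m j₀)) (k : ℕ) :
    multiCrit n m q ⟨j₀, r₀⟩ k = (famSet q j₀ r₀ k).ncard := by
  have himg : htrace '' {S : Finset ((j' : Fin n) × Fin (m j')) |
      S.card = k ∧ ⟨j₀, r₀⟩ ∈ S ∧ multiWinning n m q S ∧
        ¬ multiWinning n m q (S.erase ⟨j₀, r₀⟩)} = famSet q j₀ r₀ k := by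
    ext f
    constructor
    · rintro ⟨S, hS, rfl⟩
      exact (crit_iff q j₀ r₀ k S).1 hS
    · intro hf
      have ht : htrace (Finset.univ.sigma fun j' => f j') = f := htrace_sigma f
      refine ⟨Finset.univ.sigma fun j' => f j', ?_, ht⟩
      apply (crit_iff q j₀ r₀ k _).2
      rw [ht]
      exact hf
  rw [multiCrit, ← himg, Set.ncard_image_of_injective _ htrace_injective]

end Trace

theorem multicam_smaller_house_dominates (n : ℕ) (m : Fin n → ℕ) (q : Fin n → ℕ)
    (hm : ∀ j, 1 ≤ m j) (hq : ∀ j, q j = m j / 2 + 1)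
    (j l : Fin n) (hjl : j ≠ l) (hsize : m j < m l)
    (hcase : (Odd (m j) ∧ Odd (m l)) ∨ (Even (m j) ∧ Even (m l)) ∨
      (Even (m j) ∧ Odd (m l)) ∨ (Odd (m j) ∧ Even (m l) ∧ m l > 2 * m j))
    (r : Fin (m j)) (s : Fin (m l)) :
    ∀ k : ℕ, multiCrit n m q ⟨j, r⟩ k ≠ 0 →
      multiCrit n m q ⟨j, r⟩ k > multiCrit n m q ⟨l, s⟩ k := by
  classical
  intro k hk
  rw [multiCrit_eq q j r k] at hk ⊢
  rw [multiCrit_eq q l s k]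
  have hc : MCases (m j) (m l) := hcase
  have hqj : q j = m j / 2 + 1 := hq j
  have hql : q l = m l / 2 + 1 := hq l
  have hmj : 1 ≤ m j := hm j
  -- the per-slice injections
  have hpsi : ∀ d : ℕ,
      ∃ ψ : Finset (Fin (m j)) × Finset (Fin (m l)) → Finset (Fin (m j)) × Finset (Fin (m l)),
        d ≤ m j - (m j / 2 + 1) →
        (Set.InjOn ψ ↑(srcF (m j) (m l) (m j / 2 + 1 + d) (m l / 2 + 1) s) ∧
        (∀ x ∈ srcF (m j) (m l) (m j / 2 + 1 + d) (m l / 2 + 1) s,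
          ψ x ∈ tgtF (m j) (m l) (m j / 2 + 1) (m l / 2 + 1 + d) r) ∧
        ∃ y ∈ tgtF (m j) (m l) (m j / 2 + 1) (m l / 2 + 1 + d) r,
          ∀ x ∈ srcF (m j) (m l) (m j / 2 + 1 + d) (m l / 2 + 1) s, ψ x ≠ y) := by
    intro d
    by_cases hd : d ≤ m j - (m j / 2 + 1)
    · obtain ⟨ψ, h1, h2, h3⟩ := exists_psi hmj hsize hc r s d hd
      exact ⟨ψ, fun _ => ⟨h1, h2, h3⟩⟩
    · exact ⟨id, fun h => absurd h hd⟩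
  choose Ψ hΨ using hpsi
  -- the global map
  set Φ : (∀ j', Finset (Fin (m j'))) → (∀ j', Finset (Fin (m j'))) := fun f =>
    Function.update (Function.update f j ((Ψ ((f j).card - q j)) (f j, f l)).1) l
      ((Ψ ((f j).card - q j)) (f j, f l)).2 with hΦ
  have hΦj : ∀ f, Φ f j = ((Ψ ((f j).card - q j)) (f j, f l)).1 := by
    intro f
    rw [hΦ]
    simp only []
    rw [Function.update_of_ne hjl, Function.update_self]
  have hΦl : ∀ f, Φ f l = ((Ψ ((f j).card - q j)) (f j, f l)).2 := by
    intro f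
    rw [hΦ]
    simp only []
    rw [Function.update_self]
  have hΦo : ∀ f j', j' ≠ j → j' ≠ l → Φ f j' = f j' := by
    intro f j' h1 h2
    rw [hΦ]
    simp only []
    rw [Function.update_of_ne h2, Function.update_of_ne h1]
  -- basic facts about members of famS
  have hfam : ∀ f ∈ famSet q l s k, (f j).card - q j ≤ m j - (m j / 2 + 1) ∧
      (f j, f l) ∈ srcF (m j) (m l) (m j / 2 + 1 + ((f j).card - q j)) (m l / 2 + 1) s := by
    rintro f ⟨hs1, hs2, hs3, hs4⟩
    have hle : (f j).card ≤ m j := by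
      have := Finset.card_le_univ (f j)
      simpa using this
    have hge : q j ≤ (f j).card := hs3 j
    refine ⟨by omega, ?_⟩
    rw [mem_srcF]
    refine ⟨?_, hs1, ?_⟩
    · show (f j).card = m j / 2 + 1 + ((f j).card - q j)
      omega
    · show (f l).card = m l / 2 + 1
      rw [hs2, hql]
  -- Φ maps famS into famR
  have hmaps : ∀ f ∈ famSet q l s k, Φ f ∈ famSet q j r k := by
    intro f hf
    obtain ⟨hd, hsrc⟩ := hfam f hf
    obtain ⟨hs1, hs2, hs3, hs4⟩ := hf
    obtain ⟨hinj, hm2, _⟩ := hΨ ((f j).card - q j) hd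
    have hy := hm2 _ hsrc
    rw [mem_tgtF] at hy
    obtain ⟨hy1, hy2, hy3⟩ := hy
    have hge : q j ≤ (f j).card := hs3 j
    refine ⟨by rw [hΦj]; exact hy1, by rw [hΦj, hy2, hqj], ?_, ?_⟩
    · intro j'
      by_cases h1 : j' = j
      · subst h1
        rw [hΦj, hy2, hqj]
      · by_cases h2 : j' = l
        · subst h2
          rw [hΦl, hy3, hql]
          omega
        · rw [hΦo f j' h1 h2]
          exact hs3 j'
    · have hsum := sum_update2 hjl f ((Ψ ((f j).card - q j)) (f j, f l)).1
        ((Ψ ((f j).card - q j)) (f j, f l)).2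
      have : ∑ j', (Φ f j').card = ∑ j', ((Function.update (Function.update f j
          ((Ψ ((f j).card - q j)) (f j, f l)).1) l
          ((Ψ ((f j).card - q j)) (f j, f l)).2) j').card := by rw [hΦ]
      rw [this]
      rw [hy2, hy3] at hsum
      rw [hs2, hql] at hsum
      rw [hs4] at hsum
      omega
  -- Φ is injective on famS
  have hinj : Set.InjOn Φ (famSet q l s k) := by
    intro f hf f' hf' heq
    obtain ⟨hd, hsrc⟩ := hfam f hf
    obtain ⟨hd', hsrc'⟩ := hfam f' hf'
    have hgel : q j ≤ (f j).card := hf.2.2.1 j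
    have hgel' : q j ≤ (f' j).card := hf'.2.2.1 j
    obtain ⟨hinj1, hm1, _⟩ := hΨ ((f j).card - q j) hd
    obtain ⟨_, hm1', _⟩ := hΨ ((f' j).card - q j) hd'
    have hyl := hm1 _ hsrc
    have hyl' := hm1' _ hsrc'
    rw [mem_tgtF] at hyl hyl'
    have hll : Φ f l = Φ f' l := by rw [heq]
    rw [hΦl, hΦl] at hll
    have hdd : (f j).card - q j = (f' j).card - q j := by
      have e1 := hyl.2.2
      have e2 := hyl'.2.2
      rw [hll] at e1
      omega
    have hjj : Φ f j = Φ f' j := by rw [heq]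
    rw [hΦj, hΦj] at hjj
    have hpair : ((Ψ ((f j).card - q j)) (f j, f l)) = ((Ψ ((f j).card - q j)) (f' j, f' l)) := by
      rw [hdd] at hjj hll ⊢
      exact Prod.ext hjj hll
    have hpair2 : (f j, f l) = (f' j, f' l) := by
      apply hinj1 (Finset.mem_coe.2 hsrc) _ hpair
      rw [hdd]
      exact Finset.mem_coe.2 hsrc'
    have hfj : f j = f' j := congrArg Prod.fst hpair2
    have hfl : f l = f' l := congrArg Prod.snd hpair2
    funext j'
    by_cases h1 : j' = j
    · subst h1; exact hfj
    · by_cases h2 : j' = l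
      · subst h2; exact hfl
      · have := congrFun heq j'
        rw [hΦo f j' h1 h2, hΦo f' j' h1 h2] at this
        exact this
  -- a member of famR not in the image
  obtain ⟨g, hg⟩ := Set.nonempty_of_ncard_ne_zero hk
  obtain ⟨hg1, hg2, hg3, hg4⟩ := hg
  have hbl : q l ≤ (g l).card := hg3 l
  have hbP : (g l).card ≤ m l := by
    have := Finset.card_le_univ (g l)
    simpa using this
  have hwitness : ∃ w ∈ famSet q j r k, w ∉ Φ '' famSet q l s k := by
    by_cases hbig : (g l).card ≤ m l / 2 + 1 + (m j - (m j / 2 + 1))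
    · -- use the missed element of the target slice
      set d0 := (g l).card - (m l / 2 + 1) with hd0def
      have hd0 : d0 ≤ m j - (m j / 2 + 1) := by omega
      obtain ⟨_, _, y0, hy0t, hy0n⟩ := hΨ d0 hd0
      rw [mem_tgtF] at hy0t
      obtain ⟨hy01, hy02, hy03⟩ := hy0t
      have hbd : m l / 2 + 1 + d0 = (g l).card := by omega
      refine ⟨Function.update (Function.update g j y0.1) l y0.2, ?_, ?_⟩
      · -- membership in famR
        have e0j : (Function.update (Function.update g j y0.1) l y0.2) j = y0.1 := by
          rw [Function.update_of_ne hjl, Function.update_self]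
        have e0l : (Function.update (Function.update g j y0.1) l y0.2) l = y0.2 := by
          rw [Function.update_self]
        refine ⟨by rw [e0j]; exact hy01, by rw [e0j, hy02, hqj], ?_, ?_⟩
        · intro j'
          by_cases h1 : j' = j
          · subst h1; rw [e0j, hy02, hqj]
          · by_cases h2 : j' = l
            · subst h2; rw [e0l, hy03]; omega
            · rw [Function.update_of_ne h2, Function.update_of_ne h1]
              exact hg3 j'
        · have hsum := sum_update2 hjl g y0.1 y0.2
          rw [hy02, hy03, hg2, hg4, hqj] at hsum
          omega
      · -- not in the image
        rintro ⟨f, hf, hΦf⟩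
        obtain ⟨hd, hsrc⟩ := hfam f hf
        have hgef : q j ≤ (f j).card := hf.2.2.1 j
        obtain ⟨_, hm1, _⟩ := hΨ ((f j).card - q j) hd
        have hyt := hm1 _ hsrc
        rw [mem_tgtF] at hyt
        have el : Φ f l = y0.2 := by
          rw [hΦf, Function.update_self]
        rw [hΦl] at el
        have hdd : (f j).card - q j = d0 := by
          have e1 := hyt.2.2
          rw [el] at e1
          omega
        have ej : Φ f j = y0.1 := by
          rw [hΦf, Function.update_of_ne hjl, Function.update_self]
        rw [hΦj] at ej
        apply hy0n (f j, f l)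
        · rw [← hdd]
          exact hsrc
        · rw [← hdd]
          exact Prod.ext ej el
    · -- g itself is not in the image
      refine ⟨g, ⟨hg1, hg2, hg3, hg4⟩, ?_⟩
      rintro ⟨f, hf, hΦf⟩
      obtain ⟨hd, hsrc⟩ := hfam f hf
      have hgef : q j ≤ (f j).card := hf.2.2.1 j
      obtain ⟨_, hm1, _⟩ := hΨ ((f j).card - q j) hd
      have hyt := hm1 _ hsrc
      rw [mem_tgtF] at hyt
      have el : Φ f l = g l := by rw [hΦf]
      rw [hΦl] at el
      have := hyt.2.2
      rw [el] at this
      omega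
  obtain ⟨w, hw1, hw2⟩ := hwitness
  have himg_sub : Φ '' famSet q l s k ⊆ famSet q j r k := by
    rintro _ ⟨f, hf, rfl⟩
    exact hmaps f hf
  have hss : Φ '' famSet q l s k ⊂ famSet q j r k :=
    (Set.ssubset_iff_of_subset himg_sub).2 ⟨w, hw1, hw2⟩
  calc (famSet q l s k).ncard = (Φ '' famSet q l s k).ncard :=
        (Set.ncard_image_of_injOn hinj).symm
    _ < (famSet q j r k).ncard := Set.ncard_lt_ncard hss (Set.toFinite _)
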